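/- Let (S, 𝒮, μ) be a probability space, (Ω, ℱ) a measurable space, p a probability measure on Ω, and s ↦ q_s a Markov kernel from S to Ω. Suppose the loss l : Ω → ℝ is (σ,c)-sub-Gamma under p, is q_s-integrable for μ-almost every s, that each q_s is absolutely continuous with respect to p, that s ↦ KL(q_s‖p) is μ-integrable, and that s ↦ E_{q_s}[l] is μ-integrable. Then ∫_S (E_{q_s}[l] − E_p[l]) dμ(s) ≤ σ √(2 ∫_S KL(q_s‖p) dμ(s)) + c ∫_S KL(q_s‖p) dμ(s). -/

import Mathlib

open MeasureTheory Real ENNReal ProbabilityTheory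
open scoped Classical

/-- The Kullback–Leibler divergence `KL(q‖p)`, equal to `∫ log (dq/dp) dq` when `q` is
absolutely continuous with respect to `p` (and the integral is well defined),
and `+∞` otherwise. -/
noncomputable def klDiv {Ω : Type*} [MeasurableSpace Ω] (q p : Measure Ω) : ℝ≥0∞ :=
  if q ≪ p ∧ Integrable (llr q p) q then ENNReal.ofReal (∫ x, llr q p x ∂q) else ⊤

/-- A function `l : Ω → ℝ` is `(σ,c)`-sub-Gamma under a probability measure `p`, with
`σ > 0` and `c > 0`, if it is `p`-integrable and for all `0 < λ < 1/c`,
`log E_p[exp (λ (l − E_p[l]))] ≤ λ²σ²/(2(1 − cλ))` (the moment generating function being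
well defined). -/
def IsSubGamma {Ω : Type*} [MeasurableSpace Ω] (p : Measure Ω) (σ c : ℝ) (l : Ω → ℝ) :
    Prop :=
  0 < σ ∧ 0 < c ∧ Integrable l p ∧ ∀ lam : ℝ, 0 < lam → lam < 1 / c →
    Integrable (fun x => Real.exp (lam * (l x - ∫ y, l y ∂p))) p ∧
    Real.log (∫ x, Real.exp (lam * (l x - ∫ y, l y ∂p)) ∂p) ≤
      lam ^ 2 * σ ^ 2 / (2 * (1 - c * lam))

/-- Gibbs' inequality: nonnegativity of the KL integral for probability measures. -/
lemma integral_llr_nonneg' {Ω : Type*} [MeasurableSpace Ω] {q p : Measure Ω}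
    [IsProbabilityMeasure q] [IsProbabilityMeasure p] (hqp : q ≪ p)
    (h_int : Integrable (llr q p) q) : 0 ≤ ∫ x, llr q p x ∂q := by
  have hneg : (fun x => - llr q p x) =ᵐ[q] llr p q := MeasureTheory.neg_llr hqp
  have h_int' : Integrable (llr p q) q := (h_int.neg.congr hneg)
  have h_rn_int : Integrable (fun x => (p.rnDeriv q x).toReal) q :=
    Measure.integrable_toReal_rnDeriv
  have hle : ∀ᵐ x ∂q, llr p q x ≤ (p.rnDeriv q x).toReal - 1 := by
    filter_upwards [Measure.inv_rnDeriv hqp, Measure.rnDeriv_pos hqp,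
      hqp.ae_le (Measure.rnDeriv_lt_top q p)] with x hinv hpos hlt
    have hpos' : 0 < (p.rnDeriv q x).toReal := by
      rw [← hinv]
      simp only [Pi.inv_apply]
      rw [ENNReal.toReal_inv]
      refine inv_pos.mpr ?_
      exact ENNReal.toReal_pos hpos.ne' hlt.ne
    exact (Real.log_le_sub_one_of_pos hpos')
  have h1 : ∫ x, llr p q x ∂q ≤ ∫ x, ((p.rnDeriv q x).toReal - 1) ∂q :=
    integral_mono_ae h_int' (h_rn_int.sub (integrable_const 1)) hle
  have h2 : ∫ x, ((p.rnDeriv q x).toReal - 1) ∂q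
      = (∫ x, (p.rnDeriv q x).toReal ∂q) - 1 := by
    rw [integral_sub h_rn_int (integrable_const 1)]
    simp
  have h3 : ∫ x, (p.rnDeriv q x).toReal ∂q ≤ 1 := by
    have := Measure.setIntegral_toReal_rnDeriv_le (μ := p) (ν := q)
      (s := Set.univ) (measure_ne_top p _)
    simpa using this
  have h4 : ∫ x, llr p q x ∂q ≤ 0 := by
    rw [h2] at h1; linarith
  have h5 : ∫ x, llr q p x ∂q = - ∫ x, llr p q x ∂q := by
    rw [← integral_neg]
    exact integral_congr_ae (by filter_upwards [hneg] with x hx; rw [← hx]; ring)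
  rw [h5]; linarith

/-- Donsker–Varadhan change-of-measure inequality. -/
lemma integral_le_klDiv_add_log {Ω : Type*} [MeasurableSpace Ω] {q p : Measure Ω}
    [IsProbabilityMeasure q] [IsProbabilityMeasure p] (hqp : q ≪ p)
    (h_int : Integrable (llr q p) q) {f : Ω → ℝ} (hf : Integrable f q)
    (hfexp : Integrable (fun x => Real.exp (f x)) p) :
    ∫ x, f x ∂q ≤ (∫ x, llr q p x ∂q) + Real.log (∫ x, Real.exp (f x) ∂p) := by
  have htilt : IsProbabilityMeasure (p.tilted f) := isProbabilityMeasure_tilted hfexp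
  have hac2 : q ≪ p.tilted f := hqp.trans (absolutelyContinuous_tilted hfexp)
  have h_int2 : Integrable (llr q (p.tilted f)) q :=
    integrable_llr_tilted_right hqp hf h_int hfexp
  have h0 := integral_llr_nonneg' hac2 h_int2
  rw [integral_llr_tilted_right hqp hf hfexp h_int] at h0
  linarith

/-- **Sub-Gamma upper bound on the expected wireless risk discrepancy.** Let `μ` be a
probability measure on the side-information space `S`, `p` a probability measure on `Ω`,
and `s ↦ κ s` a Markov kernel from `S` to `Ω`.  If the loss `l : Ω → ℝ` is
`(σ,c)`-sub-Gamma under `p`, is `κ s`-integrable for `μ`-a.e. `s`, each `κ s ≪ p`,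
`s ↦ KL(κ s‖p)` is `μ`-integrable (finite integral), and `s ↦ E_{κ s}[l]` is
`μ`-integrable, then
`∫ (E_{κ s}[l] − E_p[l]) dμ(s) ≤ σ √(2 ∫ KL(κ s‖p) dμ(s)) + c ∫ KL(κ s‖p) dμ(s)`. -/
theorem expected_risk_discrepancy_le_of_subGamma {S Ω : Type*}
    [MeasurableSpace S] [MeasurableSpace Ω]
    (μ : Measure S) [IsProbabilityMeasure μ] (p : Measure Ω) [IsProbabilityMeasure p]
    (κ : Kernel S Ω) [IsMarkovKernel κ] (σ c : ℝ) (l : Ω → ℝ)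
    (hsg : IsSubGamma p σ c l)
    (hlint : ∀ᵐ s ∂μ, Integrable l (κ s))
    (hac : ∀ s, κ s ≪ p)
    (hklfin : ∫⁻ s, klDiv (κ s) p ∂μ ≠ ⊤)
    (hmean : Integrable (fun s => ∫ x, l x ∂(κ s)) μ) :
    ∫ s, (∫ x, l x ∂(κ s) - ∫ x, l x ∂p) ∂μ ≤
      σ * Real.sqrt (2 * (∫⁻ s, klDiv (κ s) p ∂μ).toReal) +
        c * (∫⁻ s, klDiv (κ s) p ∂μ).toReal := by
  obtain ⟨hσ, hc, hlp, hmgf⟩ := hsg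
  set m : ℝ := ∫ y, l y ∂p with hm
  set K : ℝ := (∫⁻ s, klDiv (κ s) p ∂μ).toReal with hK
  set D : ℝ := ∫ s, (∫ x, l x ∂(κ s) - m) ∂μ with hD
  have hK0 : 0 ≤ K := ENNReal.toReal_nonneg
  -- Key claim: for all lam ∈ (0, 1/c), lam * D ≤ K + lam² σ² / (2 (1 - c lam))
  have key : ∀ lam : ℝ, 0 < lam → lam < 1 / c →
      lam * D ≤ K + lam ^ 2 * σ ^ 2 / (2 * (1 - c * lam)) := by
    intro lam hl1 hl2
    obtain ⟨hexp, hbound⟩ := hmgf lam hl1 hl2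
    set Mlog : ℝ := Real.log (∫ x, Real.exp (lam * (l x - m)) ∂p) with hMlog
    set g : S → ℝ := fun s => lam * ((∫ x, l x ∂(κ s)) - m) - Mlog with hg
    have hg_int : Integrable g μ :=
      ((hmean.sub (integrable_const m)).const_mul lam).sub (integrable_const Mlog)
    have h_ae : ∀ᵐ s ∂μ, ENNReal.ofReal (g s) ≤ klDiv (κ s) p := by
      filter_upwards [hlint] with s hls
      by_cases hllr : Integrable (llr (κ s) p) (κ s)
      · rw [klDiv, if_pos ⟨hac s, hllr⟩]
        refine ENNReal.ofReal_le_ofReal ?_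
        have hf_int : Integrable (fun x => lam * (l x - m)) (κ s) :=
          (hls.sub (integrable_const m)).const_mul lam
        have hdv := integral_le_klDiv_add_log (hac s) hllr hf_int hexp
        have hfi : ∫ x, lam * (l x - m) ∂(κ s) = lam * ((∫ x, l x ∂(κ s)) - m) := by
          rw [integral_const_mul, integral_sub hls (integrable_const m)]
          simp
        rw [hfi] at hdv
        simp only [hg]
        linarith
      · rw [klDiv, if_neg (fun h => hllr h.2)]
        exact le_top
    have hIg : ∫ s, g s ∂μ ≤ K := by
      have h1 : ∫ s, g s ∂μ ≤ ∫ s, max (g s) 0 ∂μ :=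
        integral_mono hg_int hg_int.pos_part (fun s => le_max_left _ _)
      have h2 : ∫ s, max (g s) 0 ∂μ
          = (∫⁻ s, ENNReal.ofReal (g s) ∂μ).toReal := by
        rw [integral_eq_lintegral_of_nonneg_ae (f := fun s => max (g s) 0)
          (Filter.Eventually.of_forall fun s => le_max_right _ _)
          hg_int.pos_part.aestronglyMeasurable]
        congr 1
        refine lintegral_congr fun s => ?_
        rcases le_total (g s) 0 with h | h
        · rw [max_eq_right h, ENNReal.ofReal_of_nonpos h]; simp
        · rw [max_eq_left h]
      have h3 : ∫⁻ s, ENNReal.ofReal (g s) ∂μ ≤ ∫⁻ s, klDiv (κ s) p ∂μ :=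
        lintegral_mono_ae h_ae
      have h4 : (∫⁻ s, ENNReal.ofReal (g s) ∂μ).toReal ≤ K :=
        ENNReal.toReal_mono hklfin h3
      linarith [h1, h2 ▸ h4]
    have hIg' : ∫ s, g s ∂μ = lam * D - Mlog := by
      have h1 : Integrable (fun s => (∫ x, l x ∂(κ s)) - m) μ :=
        hmean.sub (integrable_const m)
      calc ∫ s, g s ∂μ
          = (∫ s, lam * ((∫ x, l x ∂(κ s)) - m) ∂μ) - ∫ _, (Mlog : ℝ) ∂μ :=
            integral_sub (h1.const_mul lam) (integrable_const _)
        _ = lam * D - Mlog := by rw [integral_const_mul]; simp [hD]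
    rw [hIg'] at hIg
    have : Mlog ≤ lam ^ 2 * σ ^ 2 / (2 * (1 - c * lam)) := hbound
    linarith
  -- Now optimize over lam.
  rcases eq_or_lt_of_le hK0 with hK0' | hKpos
  · -- K = 0 case
    have hKz : K = 0 := hK0'.symm
    have hD0 : D ≤ 0 := by
      refine le_of_forall_pos_le_add fun ε hε => ?_
      set lam : ℝ := min (1 / (2 * c)) (ε / σ ^ 2) with hlam
      have hσ2 : 0 < σ ^ 2 := pow_pos hσ 2
      have hl1 : 0 < lam := lt_min (by positivity) (by positivity)
      have hl2 : lam < 1 / c := by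
        refine lt_of_le_of_lt (min_le_left _ _) ?_
        rw [div_lt_div_iff₀ (by positivity) hc]
        nlinarith
      have h := key lam hl1 hl2
      rw [hKz, zero_add] at h
      have hden : (1 : ℝ) / 2 ≤ 1 - c * lam := by
        have h6 : lam ≤ 1 / (2 * c) := min_le_left _ _
        have h7 : c * lam ≤ 1 / 2 := by
          rw [mul_comm, ← le_div_iff₀ hc]
          calc lam ≤ 1 / (2 * c) := h6
          _ = 1 / 2 / c := by ring
        linarith
      have hsub : lam ^ 2 * σ ^ 2 / (2 * (1 - c * lam)) ≤ lam * ε := by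
        rw [div_le_iff₀ (by linarith)]
        have hle : lam * σ ^ 2 ≤ ε := by
          have h5 : lam ≤ ε / σ ^ 2 := min_le_right _ _
          calc lam * σ ^ 2 ≤ (ε / σ ^ 2) * σ ^ 2 := by nlinarith
          _ = ε := by field_simp
        nlinarith [mul_le_mul_of_nonneg_left hle hl1.le, mul_nonneg hl1.le hε.le, hden]
      have h8 : lam * D ≤ lam * ε := le_trans h hsub
      have h9 := le_of_mul_le_mul_left h8 hl1
      linarith
    rw [hKz]
    simpa using hD0
  · -- K > 0 case
    set r : ℝ := Real.sqrt (2 * K) with hr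
    have hrpos : 0 < r := Real.sqrt_pos.mpr (by linarith)
    have hr2 : r ^ 2 = 2 * K := Real.sq_sqrt (by linarith)
    set lam : ℝ := r / (σ + c * r) with hlam
    have hden : 0 < σ + c * r := by positivity
    have hl1 : 0 < lam := by positivity
    have hl2 : lam < 1 / c := by
      rw [hlam, div_lt_div_iff₀ hden hc]
      nlinarith
    have h := key lam hl1 hl2
    have hlamne : lam ≠ 0 := hl1.ne'
    have hD_le : D ≤ K / lam + lam * σ ^ 2 / (2 * (1 - c * lam)) := by
      rw [← mul_le_mul_iff_right₀ hl1]
      have heq : lam * (K / lam + lam * σ ^ 2 / (2 * (1 - c * lam)))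
          = K + lam ^ 2 * σ ^ 2 / (2 * (1 - c * lam)) := by
        have hne : (1 : ℝ) - c * lam ≠ 0 := by
          have : c * lam < 1 := by
            rw [mul_comm, ← lt_div_iff₀ hc]
            exact hl2
          linarith
        field_simp
      rw [heq]
      exact h
    have hopt : K / lam + lam * σ ^ 2 / (2 * (1 - c * lam)) = σ * r + c * K := by
      have h1 : 1 - c * lam = σ / (σ + c * r) := by
        rw [hlam]; field_simp; ring
      rw [h1, hlam]
      field_simp
      nlinarith [hr2, hrpos, hσ, hc, hKpos]
    rw [hopt] at hD_le
    exact hD_le
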